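/- Let n = dim V and let K₁, K₂ ⊆ 𝕋V be isotropic subspaces with dim K₁ = dim K₂ = k and K₁ ∩ K₂^⊥ ⊆ K₂. Let B̄₁ and B̄₂ be the induced nondegenerate symmetric bilinear forms on K₁^⊥/K₁ and K₂^⊥/K₂ respectively, with quotient maps q₁, q₂, and let R = {(q₁(e), q₂(e)) : e ∈ K₁^⊥ ∩ K₂^⊥} ⊆ (K₁^⊥/K₁) × (K₂^⊥/K₂). Let V₁⁺ ⊆ K₁^⊥/K₁ be a subspace of dimension n − k on which B̄₁ is positive definite, and set V₁⁻ = (V₁⁺)^⊥ with respect to B̄₁. Then there exists a unique subspace V₂⁺ ⊆ K₂^⊥/K₂ of dimension n − k on which B̄₂ is positive definite such that, setting V₂⁻ = (V₂⁺)^⊥ with respect to B̄₂, one has R = (R ∩ (V₁⁺ × V₂⁺)) + (R ∩ (V₁⁻ × V₂⁻)); i.e. the T-duality relation R is a generalised isometry between the generalised metrics V₁⁺ and V₂⁺. -/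

import Mathlib

set_option maxHeartbeats 4000000


/-- The hyperbolic pairing on the double `𝕋V = V × V*`:
`⟨(v, α), (w, β)⟩ = α(w) + β(v)`. -/
noncomputable def hyp (V : Type*) [AddCommGroup V] [Module ℝ V] :
    LinearMap.BilinForm ℝ (V × Module.Dual ℝ V) :=
  LinearMap.mk₂ ℝ (fun x y => x.2 y.1 + y.2 x.1)
    (fun x x' y => by
      simp only [Prod.fst_add, Prod.snd_add, LinearMap.add_apply, map_add]; ring)
    (fun c x y => by
      simp only [Prod.smul_fst, Prod.smul_snd, LinearMap.smul_apply, map_smul, smul_eq_mul]; ring)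
    (fun x y y' => by
      simp only [Prod.fst_add, Prod.snd_add, LinearMap.add_apply, map_add]; ring)
    (fun c x y => by
      simp only [Prod.smul_fst, Prod.smul_snd, LinearMap.smul_apply, map_smul, smul_eq_mul]; ring)

/-- The orthogonal complement `K^⊥` of a subspace `K` with respect to `B`. -/
noncomputable def orthB {E : Type*} [AddCommGroup E] [Module ℝ E]
    (B : LinearMap.BilinForm ℝ E) (K : Submodule ℝ E) : Submodule ℝ E :=
  LinearMap.BilinForm.orthogonal B K
/-- An isotropic `K`, regarded as a submodule of `K^⊥`. -/
noncomputable def Ksub {E : Type*} [AddCommGroup E] [Module ℝ E]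
    (B : LinearMap.BilinForm ℝ E) (K : Submodule ℝ E) : Submodule ℝ ↥(orthB B K) :=
  Submodule.comap (orthB B K).subtype K

/-- The reduced space `K^⊥/K`. -/
abbrev Red {E : Type*} [AddCommGroup E] [Module ℝ E]
    (B : LinearMap.BilinForm ℝ E) (K : Submodule ℝ E) :=
  ↥(orthB B K) ⧸ Ksub B K

/-- The quotient map `q : K^⊥ → K^⊥/K`. -/
noncomputable def qmap {E : Type*} [AddCommGroup E] [Module ℝ E]
    (B : LinearMap.BilinForm ℝ E) (K : Submodule ℝ E) :
    ↥(orthB B K) →ₗ[ℝ] Red B K :=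
  (Ksub B K).mkQ
/-- The map `L : K₁^⊥ ∩ K₂^⊥ → (K₁^⊥/K₁) × (K₂^⊥/K₂)`, `e ↦ (q₁(e), q₂(e))`. -/
noncomputable def Lmap {E : Type*} [AddCommGroup E] [Module ℝ E]
    (B : LinearMap.BilinForm ℝ E) (K₁ K₂ : Submodule ℝ E) :
    ↥(orthB B K₁ ⊓ orthB B K₂) →ₗ[ℝ] Red B K₁ × Red B K₂ :=
  LinearMap.prod
    (qmap B K₁ ∘ₗ Submodule.inclusion inf_le_left)
    (qmap B K₂ ∘ₗ Submodule.inclusion inf_le_right)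

lemma hyp_apply {V : Type*} [AddCommGroup V] [Module ℝ V] (x y : V × Module.Dual ℝ V) :
    hyp V x y = x.2 y.1 + y.2 x.1 := rfl

lemma hyp_isRefl (V : Type*) [AddCommGroup V] [Module ℝ V] : (hyp V).IsRefl := by
  intro x y h
  rw [hyp_apply] at h ⊢
  linarith

lemma hyp_nondeg (V : Type*) [AddCommGroup V] [Module ℝ V] [FiniteDimensional ℝ V] :
    (hyp V).Nondegenerate := by
  refine (hyp_isRefl V).nondegenerate_iff_separatingLeft.mpr ?_
  intro x h
  have h1 : x.2 = 0 := by
    ext w; simpa [hyp_apply] using h (w, 0)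
  have h2 : x.1 = 0 := by
    rw [← Module.forall_dual_apply_eq_zero_iff ℝ x.1]
    intro f; simpa [hyp_apply] using h (0, f)
  exact Prod.ext h2 h1

lemma orth_sup {E : Type*} [AddCommGroup E] [Module ℝ E]
    (B : LinearMap.BilinForm ℝ E) (A A' : Submodule ℝ E) :
    orthB B (A ⊔ A') = orthB B A ⊓ orthB B A' := by
  apply le_antisymm
  · exact le_inf (LinearMap.BilinForm.orthogonal_le le_sup_left)
      (LinearMap.BilinForm.orthogonal_le le_sup_right)
  · rintro x ⟨hx1, hx2⟩
    rw [orthB, LinearMap.BilinForm.mem_orthogonal_iff]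
    intro n hn
    obtain ⟨a, ha, a', ha', rfl⟩ := Submodule.mem_sup.mp hn
    have h1 : B a x = 0 := hx1 a ha
    have h2 : B a' x = 0 := hx2 a' ha'
    show B (a + a') x = 0
    rw [map_add, LinearMap.add_apply, h1, h2, add_zero]

lemma qmap_surjective {E : Type*} [AddCommGroup E] [Module ℝ E]
    (B : LinearMap.BilinForm ℝ E) (K : Submodule ℝ E) :
    Function.Surjective (qmap B K) := Submodule.mkQ_surjective _

lemma qmap_eq_iff {E : Type*} [AddCommGroup E] [Module ℝ E]
    (B : LinearMap.BilinForm ℝ E) (K : Submodule ℝ E) (e e' : ↥(orthB B K)) :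
    qmap B K e = qmap B K e' ↔ (e : E) - (e' : E) ∈ K := by
  rw [qmap, Submodule.mkQ_apply, Submodule.mkQ_apply, Submodule.Quotient.eq]
  exact Iff.rfl

lemma qmap_eq_zero_iff {E : Type*} [AddCommGroup E] [Module ℝ E]
    (B : LinearMap.BilinForm ℝ E) (K : Submodule ℝ E) (e : ↥(orthB B K)) :
    qmap B K e = 0 ↔ (e : E) ∈ K := by
  rw [qmap, Submodule.mkQ_apply, Submodule.Quotient.mk_eq_zero]
  exact Iff.rfl

/-- Fibrewise geometric T-duality: given isotropic `K₁, K₂ ⊆ 𝕋V` of dimension `k` with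
`K₁ ∩ K₂^⊥ ⊆ K₂`, and a generalised metric `V₁⁺` on the reduction `K₁^⊥/K₁`, there is a unique
generalised metric `V₂⁺` on `K₂^⊥/K₂` such that the T-duality relation `R` is a generalised
isometry between `V₁⁺` and `V₂⁺`. -/
theorem stmt19 (V : Type*) [AddCommGroup V] [Module ℝ V] [FiniteDimensional ℝ V] (k : ℕ)
    (K₁ K₂ : Submodule ℝ (V × Module.Dual ℝ V))
    (hK₁ : K₁ ≤ orthB (hyp V) K₁) (hK₂ : K₂ ≤ orthB (hyp V) K₂)
    (hk₁ : Module.finrank ℝ K₁ = k) (hk₂ : Module.finrank ℝ K₂ = k)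
    (hcond : K₁ ⊓ orthB (hyp V) K₂ ≤ K₂)
    (Bbar₁ : LinearMap.BilinForm ℝ (Red (hyp V) K₁))
    (hBbar₁ : ∀ e e' : ↥(orthB (hyp V) K₁),
      Bbar₁ (qmap (hyp V) K₁ e) (qmap (hyp V) K₁ e')
        = hyp V (e : V × Module.Dual ℝ V) (e' : V × Module.Dual ℝ V))
    (Bbar₂ : LinearMap.BilinForm ℝ (Red (hyp V) K₂))
    (hBbar₂ : ∀ e e' : ↥(orthB (hyp V) K₂),
      Bbar₂ (qmap (hyp V) K₂ e) (qmap (hyp V) K₂ e')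
        = hyp V (e : V × Module.Dual ℝ V) (e' : V × Module.Dual ℝ V))
    (V₁p : Submodule ℝ (Red (hyp V) K₁))
    (hV₁dim : Module.finrank ℝ V₁p = Module.finrank ℝ V - k)
    (hV₁pos : ∀ x ∈ V₁p, x ≠ 0 → 0 < Bbar₁ x x) :
    ∃! V₂p : Submodule ℝ (Red (hyp V) K₂),
      Module.finrank ℝ V₂p = Module.finrank ℝ V - k ∧
      (∀ x ∈ V₂p, x ≠ 0 → 0 < Bbar₂ x x) ∧
      LinearMap.range (Lmap (hyp V) K₁ K₂)
        = (LinearMap.range (Lmap (hyp V) K₁ K₂) ⊓ Submodule.prod V₁p V₂p)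
          ⊔ (LinearMap.range (Lmap (hyp V) K₁ K₂)
              ⊓ Submodule.prod (LinearMap.BilinForm.orthogonal Bbar₁ V₁p)
                  (LinearMap.BilinForm.orthogonal Bbar₂ V₂p)) := by
  classical
  have hrefl : (hyp V).IsRefl := hyp_isRefl V
  have hnd : (hyp V).Nondegenerate := hyp_nondeg V
  set N : ℕ := Module.finrank ℝ (V × Module.Dual ℝ V) with hN
  -- finrank of orthogonals
  have horthrank : ∀ K : Submodule ℝ (V × Module.Dual ℝ V),
      Module.finrank ℝ (orthB (hyp V) K) = N - Module.finrank ℝ K := fun K =>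
    LinearMap.BilinForm.finrank_orthogonal hnd K
  -- K₁ ⊓ K₂^⊥ = K₁ ⊓ K₂
  have h12 : K₁ ⊓ orthB (hyp V) K₂ = K₁ ⊓ K₂ :=
    le_antisymm (le_inf inf_le_left hcond) (le_inf inf_le_left (inf_le_right.trans hK₂))
  set d : ℕ := Module.finrank ℝ ↥(K₁ ⊓ K₂) with hd
  -- symmetric condition: K₂ ⊓ K₁^⊥ = K₁ ⊓ K₂
  have hsymcond : K₂ ⊓ orthB (hyp V) K₁ = K₁ ⊓ K₂ := by
    have ho : orthB (hyp V) (K₁ ⊔ orthB (hyp V) K₂) = orthB (hyp V) K₁ ⊓ K₂ := by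
      rw [orth_sup]
      congr 1
      exact LinearMap.BilinForm.orthogonal_orthogonal hnd hrefl K₂
    have hr1 : Module.finrank ℝ ↥(K₁ ⊔ orthB (hyp V) K₂)
        + Module.finrank ℝ ↥(K₁ ⊓ orthB (hyp V) K₂)
        = Module.finrank ℝ K₁ + Module.finrank ℝ ↥(orthB (hyp V) K₂) :=
      Submodule.finrank_sup_add_finrank_inf_eq _ _
    have hr2 := horthrank (K₁ ⊔ orthB (hyp V) K₂)
    have hr3 := horthrank K₂
    rw [h12] at hr1
    rw [ho] at hr2
    have hle1 : Module.finrank ℝ ↥(K₁ ⊔ orthB (hyp V) K₂) ≤ N := Submodule.finrank_le _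
    have hle2 : Module.finrank ℝ K₂ ≤ N := Submodule.finrank_le _
    have hle3 : Module.finrank ℝ K₁ ≤ N := Submodule.finrank_le _
    have hfr : Module.finrank ℝ ↥(orthB (hyp V) K₁ ⊓ K₂) ≤ d := by omega
    have hsub : K₁ ⊓ K₂ ≤ orthB (hyp V) K₁ ⊓ K₂ :=
      le_inf (inf_le_left.trans hK₁) inf_le_right
    have := Submodule.eq_of_le_of_finrank_le hsub hfr
    rw [inf_comm (orthB (hyp V) K₁) K₂] at this
    exact this.symm
  -- W := K₁^⊥ ⊓ K₂^⊥
  set W : Submodule ℝ (V × Module.Dual ℝ V) := orthB (hyp V) K₁ ⊓ orthB (hyp V) K₂ with hW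
  -- W ⊔ K₁ = K₁^⊥
  have hWK₁ : W ⊓ K₁ = K₁ ⊓ K₂ := by
    apply le_antisymm
    · intro x hx
      exact h12 ▸ ⟨hx.2, hx.1.2⟩
    · intro x hx
      exact ⟨⟨hK₁ hx.1, hK₂ hx.2⟩, hx.1⟩
  have hWsup : W ⊔ K₁ = orthB (hyp V) K₁ := by
    have hWo : W = orthB (hyp V) (K₁ ⊔ K₂) := (orth_sup _ _ _).symm
    have hr1 : Module.finrank ℝ ↥(W ⊔ K₁) + Module.finrank ℝ ↥(W ⊓ K₁)
        = Module.finrank ℝ W + Module.finrank ℝ K₁ :=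
      Submodule.finrank_sup_add_finrank_inf_eq _ _
    have hr2 : Module.finrank ℝ W = N - Module.finrank ℝ ↥(K₁ ⊔ K₂) := by
      rw [hWo]; exact horthrank _
    have hr3 : Module.finrank ℝ ↥(K₁ ⊔ K₂) + d
        = Module.finrank ℝ K₁ + Module.finrank ℝ K₂ :=
      Submodule.finrank_sup_add_finrank_inf_eq _ _
    have hr4 := horthrank K₁
    have hle1 : Module.finrank ℝ ↥(K₁ ⊔ K₂) ≤ N := Submodule.finrank_le _
    have hle2 : Module.finrank ℝ K₁ ≤ N := Submodule.finrank_le _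
    have hle3 : Module.finrank ℝ K₂ ≤ N := Submodule.finrank_le _
    rw [hWK₁] at hr1
    have hfr : Module.finrank ℝ ↥(orthB (hyp V) K₁) ≤ Module.finrank ℝ ↥(W ⊔ K₁) := by
      omega
    exact Submodule.eq_of_le_of_finrank_le (sup_le inf_le_left hK₁) hfr
  -- the two legs of L
  set f₁ : ↥W →ₗ[ℝ] Red (hyp V) K₁ :=
    qmap (hyp V) K₁ ∘ₗ Submodule.inclusion inf_le_left with hf₁
  set f₂ : ↥W →ₗ[ℝ] Red (hyp V) K₂ :=
    qmap (hyp V) K₂ ∘ₗ Submodule.inclusion inf_le_right with hf₂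
  have hLdef : Lmap (hyp V) K₁ K₂ = LinearMap.prod f₁ f₂ := rfl
  have hf₁zero : ∀ w : ↥W, f₁ w = 0 ↔ (w : V × Module.Dual ℝ V) ∈ K₁ := by
    intro w
    rw [hf₁, LinearMap.comp_apply, qmap_eq_zero_iff]
    exact Iff.rfl
  have hf₂zero : ∀ w : ↥W, f₂ w = 0 ↔ (w : V × Module.Dual ℝ V) ∈ K₂ := by
    intro w
    rw [hf₂, LinearMap.comp_apply, qmap_eq_zero_iff]
    exact Iff.rfl
  -- f₁ is surjective
  have hsurj : Function.Surjective f₁ := by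
    intro x
    obtain ⟨e, rfl⟩ := qmap_surjective (hyp V) K₁ x
    have he : (e : V × Module.Dual ℝ V) ∈ W ⊔ K₁ := by rw [hWsup]; exact e.2
    obtain ⟨w, hw, kk, hkk, hsum⟩ := Submodule.mem_sup.mp he
    refine ⟨⟨w, hw⟩, ?_⟩
    show qmap (hyp V) K₁ (Submodule.inclusion inf_le_left ⟨w, hw⟩) = qmap (hyp V) K₁ e
    rw [qmap_eq_iff]
    show (w : V × Module.Dual ℝ V) - (e : V × Module.Dual ℝ V) ∈ K₁
    have hne : (w : V × Module.Dual ℝ V) - (e : V × Module.Dual ℝ V) = -kk := by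
      rw [← hsum]; abel
    rw [hne]
    exact neg_mem hkk
  -- equal kernels
  have hker12 : ∀ w : ↥W, f₁ w = 0 → f₂ w = 0 := by
    intro w h
    rw [hf₁zero] at h
    rw [hf₂zero]
    exact hcond ⟨h, w.2.2⟩
  have hker21 : ∀ w : ↥W, f₂ w = 0 → f₁ w = 0 := by
    intro w h
    rw [hf₂zero] at h
    rw [hf₁zero]
    have : (w : V × Module.Dual ℝ V) ∈ K₂ ⊓ orthB (hyp V) K₁ := ⟨h, w.2.1⟩
    rw [hsymcond] at this
    exact this.1
  -- the induced map φ : Red₁ → Red₂, built from a section of f₁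
  set sfun : Red (hyp V) K₁ → ↥W := Function.surjInv hsurj with hsfun
  have hs : ∀ x, f₁ (sfun x) = x := fun x => Function.surjInv_eq hsurj x
  have hkey : ∀ (w : ↥W) (x : Red (hyp V) K₁), f₁ w = x → f₂ (sfun x) = f₂ w := by
    intro w x hwx
    have h0 : f₁ (sfun x - w) = 0 := by
      rw [f₁.map_sub (sfun x) w, hs x, hwx, sub_self]
    have h1 : f₂ (sfun x - w) = 0 := hker12 _ h0
    rw [f₂.map_sub (sfun x) w, sub_eq_zero] at h1
    exact h1
  set φ : Red (hyp V) K₁ →ₗ[ℝ] Red (hyp V) K₂ :=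
    { toFun := fun x => f₂ (sfun x)
      map_add' := by
        intro x y
        show f₂ (sfun (x + y)) = f₂ (sfun x) + f₂ (sfun y)
        have hxy : f₁ (sfun x + sfun y) = x + y := by
          rw [f₁.map_add (sfun x) (sfun y), hs x, hs y]
        rw [hkey _ _ hxy, f₂.map_add (sfun x) (sfun y)]
      map_smul' := by
        intro c x
        show f₂ (sfun (c • x)) = c • f₂ (sfun x)
        have hcx : f₁ (c • sfun x) = c • x := by
          rw [f₁.map_smul c (sfun x), hs x]
        rw [hkey _ _ hcx, f₂.map_smul c (sfun x)] } with hφdef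
  have hφ : ∀ w : ↥W, φ (f₁ w) = f₂ w := fun w => hkey w (f₁ w) rfl
  -- graph characterisation of the range
  have hgraph : ∀ p : Red (hyp V) K₁ × Red (hyp V) K₂,
      p ∈ LinearMap.range (Lmap (hyp V) K₁ K₂) ↔ p.2 = φ p.1 := by
    intro p
    rw [hLdef]
    constructor
    · rintro ⟨w, rfl⟩
      exact (hφ w).symm
    · intro h
      obtain ⟨w, hw⟩ := hsurj p.1
      refine ⟨w, ?_⟩
      have : f₂ w = p.2 := by rw [h, ← hw, hφ]
      exact Prod.ext (by simpa [LinearMap.prod_apply] using hw)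
        (by simpa [LinearMap.prod_apply] using this)
  -- φ is injective
  have hφinj : Function.Injective φ := by
    rw [injective_iff_map_eq_zero]
    intro x hx
    obtain ⟨w, rfl⟩ := hsurj x
    rw [hφ] at hx
    exact hker21 w hx
  -- φ is an isometry
  have hiso : ∀ x y : Red (hyp V) K₁, Bbar₂ (φ x) (φ y) = Bbar₁ x y := by
    intro x y
    obtain ⟨w, rfl⟩ := hsurj x
    obtain ⟨w', rfl⟩ := hsurj y
    rw [hφ, hφ]
    show Bbar₂ (qmap (hyp V) K₂ (Submodule.inclusion inf_le_right w))
      (qmap (hyp V) K₂ (Submodule.inclusion inf_le_right w')) = _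
    rw [hBbar₂]
    show _ = Bbar₁ (qmap (hyp V) K₁ (Submodule.inclusion inf_le_left w))
      (qmap (hyp V) K₁ (Submodule.inclusion inf_le_left w'))
    rw [hBbar₁]
    rfl
  -- Bbar₁ is reflexive
  have hB₁symm : ∀ x y : Red (hyp V) K₁, Bbar₁ x y = Bbar₁ y x := by
    intro x y
    obtain ⟨e, rfl⟩ := qmap_surjective (hyp V) K₁ x
    obtain ⟨e', rfl⟩ := qmap_surjective (hyp V) K₁ y
    rw [hBbar₁ e e', hBbar₁ e' e, hyp_apply, hyp_apply]
    ring
  have hB₁refl : Bbar₁.IsRefl := fun x y h => by rw [hB₁symm]; exact h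
  -- restriction of Bbar₁ to V₁p is nondegenerate, so V₁p ⊕ V₁p^⊥ = Red₁
  have hrestr : (Bbar₁.restrict V₁p).Nondegenerate := by
    refine (LinearMap.IsRefl.nondegenerate_iff_separatingLeft (fun x y h => by
      exact hB₁refl (x : Red (hyp V) K₁) (y : Red (hyp V) K₁) h)).mpr ?_
    rintro ⟨x, hx⟩ h
    by_contra hne
    have hxne : x ≠ 0 := fun h0 => hne (by simp [h0])
    have := h ⟨x, hx⟩
    rw [LinearMap.BilinForm.restrict_apply] at this
    exact absurd this (ne_of_gt (hV₁pos x hx hxne))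
  have hcompl : IsCompl V₁p (Bbar₁.orthogonal V₁p) :=
    LinearMap.BilinForm.isCompl_orthogonal_of_restrict_nondegenerate hB₁refl hrestr
  have hdecomp : ∀ x : Red (hyp V) K₁,
      ∃ a ∈ V₁p, ∃ b ∈ Bbar₁.orthogonal V₁p, a + b = x := by
    intro x
    have : x ∈ V₁p ⊔ Bbar₁.orthogonal V₁p := by
      rw [hcompl.sup_eq_top]; trivial
    exact Submodule.mem_sup.mp this
  have hdisj : ∀ v : Red (hyp V) K₁, v ∈ V₁p → v ∈ Bbar₁.orthogonal V₁p → v = 0 := by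
    intro v hv hv'
    by_contra hne
    have h0 : Bbar₁ v v = 0 := hv' v hv
    exact absurd h0 (ne_of_gt (hV₁pos v hv hne))
  -- the candidate V₂p
  set V₂p : Submodule ℝ (Red (hyp V) K₂) := Submodule.map φ V₁p with hV₂def
  have hV₂dim : Module.finrank ℝ V₂p = Module.finrank ℝ V - k := by
    rw [← hV₁dim, hV₂def]
    exact (Submodule.equivMapOfInjective φ hφinj V₁p).finrank_eq.symm
  have hV₂pos : ∀ x ∈ V₂p, x ≠ 0 → 0 < Bbar₂ x x := by
    rintro x ⟨a, ha, rfl⟩ hne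
    have hane : a ≠ 0 := fun h0 => hne (by rw [h0, map_zero])
    rw [hiso]
    exact hV₁pos a ha hane
  refine ⟨V₂p, ⟨hV₂dim, hV₂pos, ?_⟩, ?_⟩
  · -- the decomposition of the range
    set R := LinearMap.range (Lmap (hyp V) K₁ K₂) with hR
    apply le_antisymm
    · intro p hp
      obtain ⟨a, ha, b, hb, hab⟩ := hdecomp p.1
      have hp2 : p.2 = φ p.1 := (hgraph p).mp hp
      have hpa : (a, φ a) ∈ R ⊓ Submodule.prod V₁p V₂p := by
        refine ⟨(hgraph (a, φ a)).mpr rfl, ha, ⟨a, ha, rfl⟩⟩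
      have hφb : φ b ∈ Bbar₂.orthogonal V₂p := by
        rw [LinearMap.BilinForm.mem_orthogonal_iff]
        rintro n ⟨a', ha', rfl⟩
        show Bbar₂ (φ a') (φ b) = 0
        rw [hiso]
        exact hb a' ha'
      have hpb : (b, φ b) ∈ R ⊓ Submodule.prod (Bbar₁.orthogonal V₁p)
          (Bbar₂.orthogonal V₂p) := ⟨(hgraph (b, φ b)).mpr rfl, hb, hφb⟩
      have : p = (a, φ a) + (b, φ b) := by
        ext
        · show p.1 = a + b; exact hab.symm
        · show p.2 = φ a + φ b; rw [hp2, ← hab, map_add]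
      rw [this]
      exact Submodule.add_mem_sup hpa hpb
    · exact sup_le inf_le_left inf_le_left
  · -- uniqueness
    rintro V₂' ⟨hdim', _, heq'⟩
    have hle : V₂p ≤ V₂' := by
      rintro _ ⟨a, ha, rfl⟩
      have hmem : (a, φ a) ∈ LinearMap.range (Lmap (hyp V) K₁ K₂) :=
        (hgraph (a, φ a)).mpr rfl
      rw [heq'] at hmem
      obtain ⟨u, hu, w, hw, huw⟩ := Submodule.mem_sup.mp hmem
      have h1 : u.1 + w.1 = a := congrArg Prod.fst huw
      have h2 : u.2 + w.2 = φ a := congrArg Prod.snd huw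
      have hw1 : w.1 = 0 := by
        apply hdisj w.1 _ hw.2.1
        have : w.1 = a - u.1 := by rw [← h1]; abel
        rw [this]
        exact sub_mem ha hu.2.1
      have hw2 : w.2 = 0 := by
        have := (hgraph w).mp hw.1
        rw [this, hw1, map_zero]
      have : φ a = u.2 := by rw [← h2, hw2, add_zero]
      rw [this]
      exact hu.2.2
    exact (Submodule.eq_of_le_of_finrank_le hle (by omega)).symm
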